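/- MacMahon's fourth rule: the generating function Σ over triples (a,b,c) of non-negative integers with a + b - c ≥ 0 of x^a y^b z^c equals (1 - x y z)/((1 - x)(1 - y)(1 - x z)(1 - y z)) as formal power series in ℚ[[x,y,z]]. -/

import Mathlib

/-- The generating function of all triples `(a,b,c)` of non-negative integers with
`a + b - c ≥ 0`, as a formal power series in three variables. -/
def macmahon4Series : MvPowerSeries (Fin 3) ℚ :=
  fun d => if d 2 ≤ d 0 + d 1 then 1 else 0

namespace Mac4Aux

open MvPowerSeries Finsupp

def A : MvPowerSeries (Fin 3) ℚ := fun d => if d 2 ≤ d 0 then 1 else 0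
def B : MvPowerSeries (Fin 3) ℚ :=
  fun d => if d 0 < d 2 ∧ d 2 ≤ d 0 + d 1 then 1 else 0
def A1 : MvPowerSeries (Fin 3) ℚ := fun d => if d 2 = 0 then 1 else 0
def A2 : MvPowerSeries (Fin 3) ℚ := fun d => if d 0 = 0 ∧ d 2 = 0 then 1 else 0
def B1 : MvPowerSeries (Fin 3) ℚ :=
  fun d => if d 2 = d 0 + 1 ∧ 1 ≤ d 1 then 1 else 0
def B2 : MvPowerSeries (Fin 3) ℚ :=
  fun d => if d 0 = 0 ∧ d 2 = 1 ∧ 1 ≤ d 1 then 1 else 0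

lemma coeff_mul_one_sub_monomial (T : MvPowerSeries (Fin 3) ℚ) (m d : Fin 3 →₀ ℕ) :
    coeff d (T * (1 - monomial m 1)) =
      coeff d T - if m ≤ d then coeff (d - m) T else 0 := by
  rw [mul_sub, mul_one, map_sub, coeff_mul_monomial]
  split_ifs <;> simp

lemma pair_le_02 (d : Fin 3 →₀ ℕ) :
    (Finsupp.single 0 1 + Finsupp.single 2 1 : Fin 3 →₀ ℕ) ≤ d ↔ 1 ≤ d 0 ∧ 1 ≤ d 2 := by
  rw [Finsupp.le_def]
  constructor
  · intro h; exact ⟨by simpa using h 0, by simpa using h 2⟩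
  · rintro ⟨h0, h2⟩ i
    fin_cases i <;> simp [Finsupp.single_apply, *]

lemma pair_le_12 (d : Fin 3 →₀ ℕ) :
    (Finsupp.single 1 1 + Finsupp.single 2 1 : Fin 3 →₀ ℕ) ≤ d ↔ 1 ≤ d 1 ∧ 1 ≤ d 2 := by
  rw [Finsupp.le_def]
  constructor
  · intro h; exact ⟨by simpa using h 1, by simpa using h 2⟩
  · rintro ⟨h1, h2⟩ i
    fin_cases i <;> simp [Finsupp.single_apply, *]

lemma eq_pair_12 (d : Fin 3 →₀ ℕ) :
    d = (Finsupp.single 1 1 + Finsupp.single 2 1 : Fin 3 →₀ ℕ) ↔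
      d 0 = 0 ∧ d 1 = 1 ∧ d 2 = 1 := by
  rw [Finsupp.ext_iff]
  constructor
  · intro h; exact ⟨by simpa using h 0, by simpa using h 1, by simpa using h 2⟩
  · rintro ⟨h0, h1, h2⟩ i
    fin_cases i <;> simp [Finsupp.single_apply, *]

lemma eq_zero_iff (d : Fin 3 →₀ ℕ) :
    d = (0 : Fin 3 →₀ ℕ) ↔ d 0 = 0 ∧ d 1 = 0 ∧ d 2 = 0 := by
  rw [Finsupp.ext_iff]
  constructor
  · intro h; exact ⟨by simpa using h 0, by simpa using h 1, by simpa using h 2⟩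
  · rintro ⟨h0, h1, h2⟩ i
    fin_cases i <;> simp [*]


lemma hS : macmahon4Series = A + B := by
  ext d
  simp only [macmahon4Series, A, B, map_add, coeff_apply]
  split_ifs <;> first | rfl | (exfalso; omega) | norm_num

lemma hX02 : (X 0 * X 2 : MvPowerSeries (Fin 3) ℚ) =
    monomial (Finsupp.single 0 1 + Finsupp.single 2 1) 1 := by
  rw [X_def, X_def, monomial_mul_monomial, one_mul]

lemma hX12 : (X 1 * X 2 : MvPowerSeries (Fin 3) ℚ) =
    monomial (Finsupp.single 1 1 + Finsupp.single 2 1) 1 := by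
  rw [X_def, X_def, monomial_mul_monomial, one_mul]

lemma stepA1 : A * (1 - X 0 * X 2) = A1 := by
  rw [hX02]
  ext d
  rw [coeff_mul_one_sub_monomial]
  simp [pair_le_02, A, A1, coeff_apply, Finsupp.tsub_apply, Finsupp.add_apply, Finsupp.single_apply]
  split_ifs <;> first | rfl | (exfalso; omega) | norm_num

lemma stepA2 : A1 * (1 - X 0) = A2 := by
  rw [X_def]
  ext d
  rw [coeff_mul_one_sub_monomial]
  simp [Finsupp.single_le_iff, A1, A2, coeff_apply, Finsupp.tsub_apply, Finsupp.single_apply]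
  split_ifs <;> first | rfl | (exfalso; omega) | norm_num

lemma stepA3 : A2 * (1 - X 1) = 1 := by
  rw [X_def]
  ext d
  rw [coeff_mul_one_sub_monomial, MvPowerSeries.coeff_one]
  simp [Finsupp.single_le_iff, eq_zero_iff, A2, coeff_apply, Finsupp.tsub_apply, Finsupp.single_apply]
  split_ifs <;> first | rfl | (exfalso; omega) | norm_num

lemma stepB1 : B * (1 - X 1 * X 2) = B1 := by
  rw [hX12]
  ext d
  rw [coeff_mul_one_sub_monomial]
  simp [pair_le_12, B, B1, coeff_apply, Finsupp.tsub_apply, Finsupp.add_apply, Finsupp.single_apply]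
  split_ifs <;> first | rfl | (exfalso; omega) | norm_num

lemma stepB2 : B1 * (1 - X 0 * X 2) = B2 := by
  rw [hX02]
  ext d
  rw [coeff_mul_one_sub_monomial]
  simp [pair_le_02, B1, B2, coeff_apply, Finsupp.tsub_apply, Finsupp.add_apply, Finsupp.single_apply]
  split_ifs <;> first | rfl | (exfalso; omega) | norm_num

lemma stepB3 : B2 * (1 - X 1) =
    monomial (Finsupp.single 1 1 + Finsupp.single 2 1) 1 := by
  rw [X_def]
  ext d
  rw [coeff_mul_one_sub_monomial, MvPowerSeries.coeff_monomial]
  simp [Finsupp.single_le_iff, eq_pair_12, B2, coeff_apply, Finsupp.tsub_apply, Finsupp.single_apply]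
  split_ifs <;> first | rfl | (exfalso; omega) | norm_num

lemma hA : A * ((1 - X 0) * (1 - X 1) * (1 - X 0 * X 2) * (1 - X 1 * X 2)) =
    1 - X 1 * X 2 := by
  calc A * ((1 - X 0) * (1 - X 1) * (1 - X 0 * X 2) * (1 - X 1 * X 2))
      = A * (1 - X 0 * X 2) * (1 - X 0) * (1 - X 1) * (1 - X 1 * X 2) := by ring
    _ = 1 - X 1 * X 2 := by rw [stepA1, stepA2, stepA3, one_mul]

lemma hB : B * ((1 - X 0) * (1 - X 1) * (1 - X 0 * X 2) * (1 - X 1 * X 2)) =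
    X 1 * X 2 * (1 - X 0) := by
  calc B * ((1 - X 0) * (1 - X 1) * (1 - X 0 * X 2) * (1 - X 1 * X 2))
      = B * (1 - X 1 * X 2) * (1 - X 0 * X 2) * (1 - X 1) * (1 - X 0) := by ring
    _ = X 1 * X 2 * (1 - X 0) := by rw [stepB1, stepB2, stepB3, hX12]

end Mac4Aux

/-- MacMahon's fourth rule: `Σ_{a+b≥c} x^a y^b z^c
  = (1 - xyz)/((1-x)(1-y)(1-xz)(1-yz))` as formal power series. -/
theorem macmahon_fourth_rule :
    macmahon4Series *
      ((1 - MvPowerSeries.X 0) * (1 - MvPowerSeries.X 1) *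
       (1 - MvPowerSeries.X 0 * MvPowerSeries.X 2) *
       (1 - MvPowerSeries.X 1 * MvPowerSeries.X 2)) =
    1 - MvPowerSeries.X 0 * MvPowerSeries.X 1 * MvPowerSeries.X 2 := by
  rw [Mac4Aux.hS, add_mul, Mac4Aux.hA, Mac4Aux.hB]
  ring
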